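/- Active-component degree bound (the key claim in Lemma 5 of the paper): Let T₀ be a finite tree with vertex set V₀ and let v ∈ V₀ be a distinguished vertex. Let 𝒞 be a partition of V₀ such that every part induces a connected subgraph of T₀, and suppose 𝒞 is split into two disjoint subfamilies 𝒞_A (active) and 𝒞_I (inactive) with 𝒞_A nonempty. Let C_v denote the part containing v, and assume every part C ∈ 𝒞_I with C ≠ C_v satisfies |δ(C) ∩ E(T₀)| ≥ 2. Then: if C_v ∈ 𝒞_A, ∑_{C ∈ 𝒞_A} |δ(C) ∩ E(T₀)| ≤ 2|𝒞_A| − 2; and if C_v ∈ 𝒞_I, ∑_{C ∈ 𝒞_A} |δ(C) ∩ E(T₀)| ≤ 2|𝒞_A| − 1. -/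
import Mathlib

open scoped Classical
open Finset

/-- An edge `e` crosses the cut `δ(C)`: it has exactly one endpoint in `C`. -/
def Crosses {V : Type*} (e : Sym2 V) (C : Finset V) : Prop :=
  ∃ u v, e = s(u, v) ∧ u ∈ C ∧ v ∉ C

/-- Active-component degree bound (the key claim in Lemma 5 of the paper). -/
theorem active_component_degree_bound
    {V : Type*} [Fintype V] [DecidableEq V]
    (T₀ : SimpleGraph V) (htree : T₀.IsTree) (v : V)
    (𝒞A 𝒞I : Finset (Finset V))
    (hAI : Disjoint 𝒞A 𝒞I)
    (hdisj : ∀ C ∈ 𝒞A ∪ 𝒞I, ∀ C' ∈ 𝒞A ∪ 𝒞I, C ≠ C' → Disjoint C C')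
    (hcover : (𝒞A ∪ 𝒞I).biUnion id = Finset.univ)
    (hconn : ∀ C ∈ 𝒞A ∪ 𝒞I, (T₀.induce (C : Set V)).Connected)
    (hAne : 𝒞A.Nonempty)
    (Cv : Finset V) (hCv : Cv ∈ 𝒞A ∪ 𝒞I) (hvCv : v ∈ Cv)
    (hinactive : ∀ C ∈ 𝒞I, C ≠ Cv →
      2 ≤ (T₀.edgeFinset.filter (fun e => Crosses e C)).card) :
    (Cv ∈ 𝒞A →
      (∑ C ∈ 𝒞A, ((T₀.edgeFinset.filter (fun e => Crosses e C)).card : ℤ)) ≤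
        2 * (𝒞A.card : ℤ) - 2) ∧
    (Cv ∈ 𝒞I →
      (∑ C ∈ 𝒞A, ((T₀.edgeFinset.filter (fun e => Crosses e C)).card : ℤ)) ≤
        2 * (𝒞A.card : ℤ) - 1) := by
  classical
  set 𝒞 : Finset (Finset V) := 𝒞A ∪ 𝒞I with h𝒞
  set E : Finset (Sym2 V) := T₀.edgeFinset with hE
  set f : Finset V → ℕ := fun C => (E.filter (fun e => Crosses e C)).card with hf
  -- every part is nonempty
  have hne : ∀ C ∈ 𝒞, C.Nonempty := by
    intro C hC
    obtain ⟨⟨x, hx⟩⟩ := (hconn C hC).nonempty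
    exact ⟨x, hx⟩
  -- the part containing each vertex
  have hex : ∀ x : V, ∃ C ∈ 𝒞, x ∈ C := by
    intro x
    have hx : x ∈ 𝒞.biUnion id := hcover ▸ Finset.mem_univ x
    simpa using hx
  choose pt hpt hxpt using hex
  have huniq : ∀ {x : V} {C : Finset V}, C ∈ 𝒞 → x ∈ C → C = pt x := by
    intro x C hC hx
    by_contra hnee
    exact (Finset.disjoint_left.mp (hdisj C hC (pt x) (hpt x) hnee)) hx (hxpt x)
  -- Internal predicate
  set Internal : Sym2 V → Prop := fun e => ∃ C ∈ 𝒞, ∀ x ∈ e, x ∈ C with hInternal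
  -- Step 1: double counting, swap sums
  have swap : ∑ C ∈ 𝒞, f C = ∑ e ∈ E, (𝒞.filter (fun C => Crosses e C)).card := by
    simp only [hf, Finset.card_filter]
    exact Finset.sum_comm
  -- Step 2: per-edge value
  have gval' : ∀ u w : V, T₀.Adj u w → (𝒞.filter (fun C => Crosses s(u, w) C)).card
      = if Internal s(u, w) then 0 else 2 := by
    intro u w hadj
    have huw : u ≠ w := hadj.ne
    have hcr : ∀ C : Finset V, Crosses s(u, w) C ↔ (u ∈ C ∧ w ∉ C) ∨ (w ∈ C ∧ u ∉ C) := by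
      intro C
      constructor
      · rintro ⟨a, b, hab, ha, hb⟩
        rw [Sym2.eq_iff] at hab
        rcases hab with ⟨rfl, rfl⟩ | ⟨rfl, rfl⟩
        · exact Or.inl ⟨ha, hb⟩
        · exact Or.inr ⟨ha, hb⟩
      · rintro (⟨h1, h2⟩ | ⟨h1, h2⟩)
        · exact ⟨u, w, rfl, h1, h2⟩
        · exact ⟨w, u, Sym2.eq_swap, h1, h2⟩
    have hint : Internal s(u, w) ↔ pt u = pt w := by
      constructor
      · rintro ⟨C, hC, hall⟩
        have h1 := huniq hC (hall u (by simp))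
        have h2 := huniq hC (hall w (by simp))
        rw [← h1, ← h2]
      · intro h
        refine ⟨pt u, hpt u, ?_⟩
        intro x hx
        rcases Sym2.mem_iff.mp hx with h' | h'
        · rw [h']; exact hxpt u
        · rw [h', h]; exact hxpt w
    by_cases hsame : pt u = pt w
    · rw [if_pos (hint.mpr hsame)]
      rw [Finset.card_eq_zero, Finset.filter_eq_empty_iff]
      intro C hC hcross
      rcases (hcr C).mp hcross with ⟨h1, h2⟩ | ⟨h1, h2⟩
      · have := huniq hC h1
        exact h2 (by rw [this, hsame]; exact hxpt w)
      · have := huniq hC h1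
        exact h2 (by rw [this, ← hsame]; exact hxpt u)
    · rw [if_neg (fun h => hsame (hint.mp h))]
      have : 𝒞.filter (fun C => Crosses s(u, w) C) = {pt u, pt w} := by
        ext C
        simp only [Finset.mem_filter, Finset.mem_insert, Finset.mem_singleton]
        constructor
        · rintro ⟨hC, hcross⟩
          rcases (hcr C).mp hcross with ⟨h1, _⟩ | ⟨h1, _⟩
          · exact Or.inl (huniq hC h1)
          · exact Or.inr (huniq hC h1)
        · rintro (rfl | rfl)
          · exact ⟨hpt u, (hcr _).mpr (Or.inl ⟨hxpt u, fun hw => hsame (huniq (hpt u) hw)⟩)⟩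
          · exact ⟨hpt w, (hcr _).mpr (Or.inr ⟨hxpt w, fun hu => (hsame (huniq (hpt w) hu).symm)⟩)⟩
      rw [this, Finset.card_pair hsame]
  have gval : ∀ e ∈ E, (𝒞.filter (fun C => Crosses e C)).card
      = if Internal e then 0 else 2 := by
    intro e he
    rw [hE, SimpleGraph.mem_edgeFinset] at he
    induction e with
    | _ u w => exact gval' u w he
  -- Step 3: total crossing sum
  have step3 : ∑ C ∈ 𝒞, f C = 2 * (E.filter (fun e => ¬ Internal e)).card := by
    rw [swap, Finset.sum_congr rfl gval]
    rw [Finset.card_filter, Finset.mul_sum]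
    apply Finset.sum_congr rfl
    intro e _
    by_cases h : Internal e <;> simp [h]
  -- Step 4: internal edges per part
  set Int : Finset V → Finset (Sym2 V) := fun C => E.filter (fun e => ∀ x ∈ e, x ∈ C) with hIntf
  have hintcard : ∀ C ∈ 𝒞, (Int C).card + 1 = C.card := by
    intro C hC
    -- the induced subgraph is a tree
    have hac : (T₀.induce (C : Set V)).IsAcyclic := by
      intro x c hc'
      let femb : T₀.induce (C : Set V) ↪g T₀ := SimpleGraph.Embedding.induce (C : Set V)
      exact htree.2 _ (hc'.map (f := femb.toHom) femb.injective)
    have ht : (T₀.induce (C : Set V)).IsTree := ⟨hconn C hC, hac⟩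
    have hcard := ht.card_edgeFinset
    have himg : Int C = (T₀.induce (C : Set V)).edgeFinset.image (Sym2.map Subtype.val) := by
      ext e
      simp only [Finset.mem_image, hIntf, Finset.mem_filter]
      constructor
      · rintro ⟨he, hall⟩
        rw [hE, SimpleGraph.mem_edgeFinset] at he
        induction e with
        | _ u w =>
          have hu : u ∈ C := hall u (by simp)
          have hw : w ∈ C := hall w (by simp)
          refine ⟨s(⟨u, hu⟩, ⟨w, hw⟩), ?_, ?_⟩
          · rw [SimpleGraph.mem_edgeFinset]
            exact he
          · rfl
      · rintro ⟨e', he', rfl⟩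
        induction e' with
        | _ a b =>
          rw [SimpleGraph.mem_edgeFinset] at he'
          have hadj : T₀.Adj a.val b.val := he'
          refine ⟨by rw [hE, SimpleGraph.mem_edgeFinset]; exact hadj, ?_⟩
          intro x hx
          rcases Sym2.mem_iff.mp hx with rfl | rfl
          · exact a.2
          · exact b.2
    have hval : Function.Injective (Subtype.val : ↥(C : Set V) → V) := by exact Subtype.val_injective
    have hinj : Function.Injective (Sym2.map (Subtype.val : ↥(C : Set V) → V)) :=
      Sym2.map.injective hval
    rw [himg, Finset.card_image_of_injective _ hinj, hcard]
    simp [Fintype.card_coe]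
  -- internal edges partition into the per-part internal edges
  have hpart : E.filter (fun e => Internal e) = 𝒞.biUnion Int := by
    ext e
    simp only [Finset.mem_filter, Finset.mem_biUnion, hIntf, hInternal]
    tauto
  have hdisjInt : ∀ C ∈ 𝒞, ∀ C' ∈ 𝒞, C ≠ C' → Disjoint (Int C) (Int C') := by
    intro C hC C' hC' hne'
    rw [Finset.disjoint_left]
    intro e heC heC'
    simp only [hIntf, Finset.mem_filter] at heC heC'
    obtain ⟨x, hx⟩ : ∃ x, x ∈ e := by
      induction e with
      | _ u w => exact ⟨u, by simp⟩
    exact (Finset.disjoint_left.mp (hdisj C hC C' hC' hne')) (heC.2 x hx) (heC'.2 x hx)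
  have hintsum : (E.filter (fun e => Internal e)).card = ∑ C ∈ 𝒞, (Int C).card := by
    rw [hpart]
    exact Finset.card_biUnion hdisjInt
  -- the parts cover V
  have hsumcard : ∑ C ∈ 𝒞, C.card = Fintype.card V := by
    have := Finset.card_biUnion (s := 𝒞) (t := id) (fun C hC C' hC' h => hdisj C hC C' hC' h)
    rw [hcover] at this
    simpa using this.symm
  -- edge count of the tree
  have hEcard : E.card + 1 = Fintype.card V := htree.card_edgeFinset
  have hsplit : (E.filter (fun e => Internal e)).card
      + (E.filter (fun e => ¬ Internal e)).card = E.card :=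
    Finset.card_filter_add_card_filter_not _
  -- put it together over ℤ
  have hk : (𝒞.card : ℤ) = (𝒞A.card : ℤ) + (𝒞I.card : ℤ) := by
    rw [h𝒞, Finset.card_union_of_disjoint hAI]; push_cast; ring
  have htotal : (∑ C ∈ 𝒞, (f C : ℤ)) = 2 * (𝒞A.card : ℤ) + 2 * (𝒞I.card : ℤ) - 2 := by
    have h1 : (∑ C ∈ 𝒞, (f C : ℤ)) = 2 * ((E.filter (fun e => ¬ Internal e)).card : ℤ) := by
      rw [← Nat.cast_sum, step3]; push_cast; ring
    have h2 : (∑ C ∈ 𝒞, ((Int C).card : ℤ)) + 𝒞.card = ∑ C ∈ 𝒞, (C.card : ℤ) := by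
      have hc1 : (𝒞.card : ℤ) = ∑ _C ∈ 𝒞, (1 : ℤ) := by simp
      rw [hc1, ← Finset.sum_add_distrib]
      apply Finset.sum_congr rfl
      intro C hC
      have := hintcard C hC
      push_cast [← this]
      ring
    have h3 : (∑ C ∈ 𝒞, (C.card : ℤ)) = (Fintype.card V : ℤ) := by
      rw [← Nat.cast_sum, hsumcard]
    have h4 : ((E.filter (fun e => Internal e)).card : ℤ)
        = ∑ C ∈ 𝒞, ((Int C).card : ℤ) := by
      rw [← Nat.cast_sum, hintsum]
    have h5 : ((E.filter (fun e => Internal e)).card : ℤ)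
        + ((E.filter (fun e => ¬ Internal e)).card : ℤ) = (E.card : ℤ) := by
      rw [← Nat.cast_add, hsplit]
    have h6 : (E.card : ℤ) + 1 = (Fintype.card V : ℤ) := by
      rw [← Nat.cast_add_one, hEcard]
    rw [h1]
    have := hk
    linarith
  have hsumsplit : (∑ C ∈ 𝒞, (f C : ℤ))
      = (∑ C ∈ 𝒞A, (f C : ℤ)) + (∑ C ∈ 𝒞I, (f C : ℤ)) := by
    rw [h𝒞, Finset.sum_union hAI]
  -- δ(Cv) ≥ 1 when there are at least two parts (used in case Cv ∈ 𝒞I)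
  have hCvpos : Cv ∈ 𝒞I → 1 ≤ (f Cv : ℤ) := by
    intro hCvI
    obtain ⟨C', hC'A⟩ := hAne
    have hne' : C' ≠ Cv := by
      rintro rfl
      exact (Finset.disjoint_left.mp hAI) hC'A hCvI
    obtain ⟨w, hw⟩ := hne C' (Finset.mem_union_left _ hC'A)
    have hwCv : w ∉ Cv := by
      intro hwCv
      exact (Finset.disjoint_left.mp
        (hdisj C' (Finset.mem_union_left _ hC'A) Cv hCv hne')) hw hwCv
    obtain ⟨p⟩ := htree.1.preconnected v w
    obtain ⟨d, _, hd1, hd2⟩ := p.exists_boundary_dart (Cv : Set V) hvCv hwCv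
    have hde : d.edge ∈ E := by
      rw [hE, SimpleGraph.mem_edgeFinset]
      exact d.edge_mem
    have hcross : Crosses d.edge Cv := ⟨d.fst, d.snd, rfl, hd1, hd2⟩
    have : (E.filter (fun e => Crosses e Cv)).Nonempty :=
      ⟨d.edge, Finset.mem_filter.mpr ⟨hde, hcross⟩⟩
    have := Finset.card_pos.mpr this
    simp only [hf]
    exact_mod_cast this
  constructor
  · -- Case Cv ∈ 𝒞A
    intro hCvA
    have hI : 2 * (𝒞I.card : ℤ) ≤ ∑ C ∈ 𝒞I, (f C : ℤ) := by
      have : ∀ C ∈ 𝒞I, (2 : ℤ) ≤ (f C : ℤ) := by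
        intro C hCI
        have hne' : C ≠ Cv := by
          rintro rfl
          exact (Finset.disjoint_left.mp hAI) hCvA hCI
        exact_mod_cast hinactive C hCI hne'
      calc 2 * (𝒞I.card : ℤ) = ∑ _C ∈ 𝒞I, (2 : ℤ) := by
            rw [Finset.sum_const]; ring
        _ ≤ ∑ C ∈ 𝒞I, (f C : ℤ) := Finset.sum_le_sum this
    linarith [htotal, hsumsplit]
  · -- Case Cv ∈ 𝒞I
    intro hCvI
    have hI : 2 * (𝒞I.card : ℤ) - 1 ≤ ∑ C ∈ 𝒞I, (f C : ℤ) := by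
      have hsplit' : (∑ C ∈ 𝒞I, (f C : ℤ))
          = (f Cv : ℤ) + ∑ C ∈ 𝒞I.erase Cv, (f C : ℤ) :=
        (Finset.add_sum_erase _ _ hCvI).symm
      have hrest : 2 * ((𝒞I.erase Cv).card : ℤ) ≤ ∑ C ∈ 𝒞I.erase Cv, (f C : ℤ) := by
        have : ∀ C ∈ 𝒞I.erase Cv, (2 : ℤ) ≤ (f C : ℤ) := by
          intro C hC
          exact_mod_cast hinactive C (Finset.mem_of_mem_erase hC) (Finset.ne_of_mem_erase hC)
        calc 2 * ((𝒞I.erase Cv).card : ℤ) = ∑ _C ∈ 𝒞I.erase Cv, (2 : ℤ) := by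
              rw [Finset.sum_const]; ring
          _ ≤ _ := Finset.sum_le_sum this
      have hcarde : ((𝒞I.erase Cv).card : ℤ) = (𝒞I.card : ℤ) - 1 := by
        rw [Finset.card_erase_of_mem hCvI]
        have : 1 ≤ 𝒞I.card := Finset.card_pos.mpr ⟨Cv, hCvI⟩
        push_cast [Nat.cast_sub this]
        ring
      have := hCvpos hCvI
      rw [hsplit', ]
      rw [hcarde] at hrest
      linarith
    linarith [htotal, hsumsplit]
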